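/- Let m ≥ 1. Let A be n×n, B⁰ and B¹ n×d real matrices; S an n×n real symmetric positive semidefinite matrix, s ∈ ℝⁿ, s̃ ∈ ℝ; c_i ∈ ℝⁿ, C_i⁰, C_i¹ n×d real matrices (i = 1,…,p); D n×n symmetric, E d×d symmetric positive definite, d ∈ ℝⁿ, e ∈ ℝ^d, d̃ ∈ ℝ; and r^i ∈ ℝ^d, R̃^i n×d, R^{ij} d×d for i,j = 0,…,m-1, with (R^{ij})ᵀ = R^{ji}. For x ∈ ℝⁿ, u ∈ ℝ^d, and w_0,…,w_m ∈ ℝ^d, set x⁺ = Ax + B⁰u + B¹w_0 and define J(x,u,w_0,…,w_m) = d̃ + 2xᵀd + xᵀDx + 2uᵀe + uᵀEu + s̃ + 2(x⁺)ᵀs + (x⁺)ᵀS x⁺ + Σ_{i=1}^p (c_i + C_i⁰u + C_i¹w_0)ᵀS(c_i + C_i⁰u + C_i¹w_0) + 2Σ_{i=0}^{m-1} w_{i+1}ᵀ r^i + 2(x⁺)ᵀ Σ_{i=0}^{m-1} R̃^i w_{i+1} + Σ_{i,j=0}^{m-1} w_{i+1}ᵀ R^{ij} w_{j+1}. Set H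 = E + (B⁰)ᵀSB⁰ + Σ_i (C_i⁰)ᵀS C_i⁰. Then H is symmetric positive definite and, for every fixed x, w_0,…,w_m, the function u ↦ J(x,u,w_0,…,w_m) has the unique global minimizer u* = I• + Lx + Σ_{i=0}^m M^i w_i, where I• = -H⁻¹(e + (B⁰)ᵀs + Σ_i (C_i⁰)ᵀS c_i), L = -H⁻¹(B⁰)ᵀSA, M⁰ = -H⁻¹((B⁰)ᵀSB¹ + Σ_i (C_i⁰)ᵀS C_i¹), and M^i = -H⁻¹(B⁰)ᵀR̃^{i-1} for i = 1,…,m. -/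

import Mathlib

open Matrix

set_option maxHeartbeats 1000000

private lemma mv_dot {n d : ℕ} (N : Matrix (Fin n) (Fin d) ℝ) (u : Fin d → ℝ) (z : Fin n → ℝ) :
    (N *ᵥ u) ⬝ᵥ z = u ⬝ᵥ (Nᵀ *ᵥ z) := by
  rw [dotProduct_comm, Matrix.dotProduct_mulVec, ← Matrix.mulVec_transpose, dotProduct_comm]

private lemma sum_mv {k n d : ℕ} (M : Fin k → Matrix (Fin n) (Fin d) ℝ) (v : Fin d → ℝ) :
    (∑ i : Fin k, M i) *ᵥ v = ∑ i : Fin k, M i *ᵥ v := by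
  ext j
  simp [Matrix.mulVec, dotProduct, Finset.sum_apply, Matrix.sum_apply, Finset.sum_mul]
  rw [Finset.sum_comm]

private lemma mv_sum {k n d : ℕ} (M : Matrix (Fin n) (Fin d) ℝ) (v : Fin k → Fin d → ℝ) :
    M *ᵥ (∑ i : Fin k, v i) = ∑ i : Fin k, M *ᵥ v i := by
  exact map_sum M.mulVecLin v Finset.univ

private lemma dot_sum {k d : ℕ} (u : Fin d → ℝ) (v : Fin k → Fin d → ℝ) :
    u ⬝ᵥ (∑ i : Fin k, v i) = ∑ i : Fin k, u ⬝ᵥ v i := by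
  simp [dotProduct, Finset.sum_apply, Finset.mul_sum]
  rw [Finset.sum_comm]

private lemma sq_expand {n d : ℕ} {S : Matrix (Fin n) (Fin n) ℝ} (hS : Sᵀ = S)
    (N : Matrix (Fin n) (Fin d) ℝ) (a : Fin n → ℝ) (u : Fin d → ℝ) :
    (a + N *ᵥ u) ⬝ᵥ (S *ᵥ (a + N *ᵥ u))
      = a ⬝ᵥ (S *ᵥ a) + 2 * (u ⬝ᵥ (Nᵀ *ᵥ (S *ᵥ a))) + u ⬝ᵥ ((Nᵀ * S * N) *ᵥ u) := by
  have h1 : a ⬝ᵥ (S *ᵥ (N *ᵥ u)) = u ⬝ᵥ (Nᵀ *ᵥ (S *ᵥ a)) := by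
    rw [dotProduct_comm, mv_dot S (N *ᵥ u) a, hS, mv_dot N u (S *ᵥ a)]
  have h2 : (N *ᵥ u) ⬝ᵥ (S *ᵥ (N *ᵥ u)) = u ⬝ᵥ ((Nᵀ * S * N) *ᵥ u) := by
    rw [mv_dot N u (S *ᵥ (N *ᵥ u)), Matrix.mulVec_mulVec, Matrix.mulVec_mulVec]
  simp only [Matrix.mulVec_add, dotProduct_add, add_dotProduct, h1, h2,
    mv_dot N u (S *ᵥ a)]
  ring

private lemma quad_min {d : ℕ} {H : Matrix (Fin d) (Fin d) ℝ} (hH : H.PosDef)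
    (b u ustar : Fin d → ℝ) (hstar : H *ᵥ ustar = -b) (hne : u ≠ ustar) :
    ustar ⬝ᵥ (H *ᵥ ustar) + 2 * (ustar ⬝ᵥ b) < u ⬝ᵥ (H *ᵥ u) + 2 * (u ⬝ᵥ b) := by
  have hsym : Hᵀ = H := by
    have := hH.1
    rw [Matrix.IsHermitian, Matrix.conjTranspose_eq_transpose_of_trivial] at this
    exact this
  have hv : u - ustar ≠ 0 := sub_ne_zero.mpr hne
  have hpos : 0 < (u - ustar) ⬝ᵥ (H *ᵥ (u - ustar)) := by
    have := hH.dotProduct_mulVec_pos hv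
    simpa using this
  have hcross : ustar ⬝ᵥ (H *ᵥ u) = u ⬝ᵥ (H *ᵥ ustar) := by
    rw [dotProduct_comm, mv_dot H u ustar, hsym]
  have hkey : (u - ustar) ⬝ᵥ (H *ᵥ (u - ustar))
      = u ⬝ᵥ (H *ᵥ u) + 2 * (u ⬝ᵥ b) - (ustar ⬝ᵥ (H *ᵥ ustar) + 2 * (ustar ⬝ᵥ b)) := by
    simp only [Matrix.mulVec_sub, dotProduct_sub, sub_dotProduct, hcross, hstar,
      dotProduct_neg]
    ring
  linarith [hkey, hpos]

/-- Case 1 (K-l-1 < k ≤ K-1, m = K-k ≥ 1) of the inductive step of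
Theorem 1: `H` is symmetric positive definite and `u ↦ J(x,u,w_0,…,w_m)` has the
unique global minimizer `u* = I• + Lx + Σ_{i=0}^m M^i w_i`, where `M^i = -H⁻¹(B⁰)ᵀR̃^{i-1}`
for `i = 1,…,m`. -/
theorem case1_optimal_control {n d p m : ℕ} (hm : 1 ≤ m)
    (A : Matrix (Fin n) (Fin n) ℝ) (B0 B1 : Matrix (Fin n) (Fin d) ℝ)
    (S : Matrix (Fin n) (Fin n) ℝ) (hS : S.PosSemidef)
    (svec : Fin n → ℝ) (stil : ℝ)
    (c : Fin p → Fin n → ℝ) (C0 C1 : Fin p → Matrix (Fin n) (Fin d) ℝ)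
    (D : Matrix (Fin n) (Fin n) ℝ) (hD : D.IsSymm)
    (E : Matrix (Fin d) (Fin d) ℝ) (hE : E.PosDef)
    (dvec : Fin n → ℝ) (evec : Fin d → ℝ) (dtil : ℝ)
    (r : Fin m → Fin d → ℝ) (Rt : Fin m → Matrix (Fin n) (Fin d) ℝ)
    (R : Fin m → Fin m → Matrix (Fin d) (Fin d) ℝ)
    (hR : ∀ i j : Fin m, (R i j)ᵀ = R j i) :
    let J : (Fin n → ℝ) → (Fin d → ℝ) → (Fin (m + 1) → Fin d → ℝ) → ℝ := fun x u w =>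
      dtil + 2 * (x ⬝ᵥ dvec) + x ⬝ᵥ (D *ᵥ x) + 2 * (u ⬝ᵥ evec) + u ⬝ᵥ (E *ᵥ u)
        + stil + 2 * ((A *ᵥ x + B0 *ᵥ u + B1 *ᵥ w 0) ⬝ᵥ svec)
        + (A *ᵥ x + B0 *ᵥ u + B1 *ᵥ w 0) ⬝ᵥ (S *ᵥ (A *ᵥ x + B0 *ᵥ u + B1 *ᵥ w 0))
        + ∑ i : Fin p, (c i + C0 i *ᵥ u + C1 i *ᵥ w 0) ⬝ᵥ
            (S *ᵥ (c i + C0 i *ᵥ u + C1 i *ᵥ w 0))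
        + 2 * ∑ i : Fin m, w i.succ ⬝ᵥ r i
        + 2 * ((A *ᵥ x + B0 *ᵥ u + B1 *ᵥ w 0) ⬝ᵥ ∑ i : Fin m, Rt i *ᵥ w i.succ)
        + ∑ i : Fin m, ∑ j : Fin m, w i.succ ⬝ᵥ (R i j *ᵥ w j.succ)
    let H := E + B0ᵀ * S * B0 + ∑ i : Fin p, (C0 i)ᵀ * S * C0 i
    let Istar : Fin d → ℝ :=
      -(H⁻¹ *ᵥ (evec + B0ᵀ *ᵥ svec + ∑ i : Fin p, (C0 i)ᵀ *ᵥ (S *ᵥ c i)))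
    let L := -(H⁻¹ * B0ᵀ * S * A)
    let M0 := -(H⁻¹ * (B0ᵀ * S * B1 + ∑ i : Fin p, (C0 i)ᵀ * S * C1 i))
    -- `M i` is the matrix `M^{i+1} = -H⁻¹(B⁰)ᵀR̃^i` for `i = 0,…,m-1`
    let M : Fin m → Matrix (Fin d) (Fin d) ℝ := fun i => -(H⁻¹ * (B0ᵀ * Rt i))
    H.PosDef ∧ ∀ (x : Fin n → ℝ) (w : Fin (m + 1) → Fin d → ℝ),
      ∀ u : Fin d → ℝ,
        u ≠ Istar + L *ᵥ x + M0 *ᵥ w 0 + ∑ i : Fin m, M i *ᵥ w i.succ →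
        J x (Istar + L *ᵥ x + M0 *ᵥ w 0 + ∑ i : Fin m, M i *ᵥ w i.succ) w < J x u w := by
  intro J H Istar L M0 M
  have hSsym : Sᵀ = S := by
    have := hS.1
    rw [Matrix.IsHermitian, Matrix.conjTranspose_eq_transpose_of_trivial] at this
    exact this
  have hHpd : H.PosDef := by
    have h1 : (B0ᵀ * S * B0).PosSemidef := hS.conjTranspose_mul_mul_same B0
    have h2 : (∑ i : Fin p, (C0 i)ᵀ * S * C0 i).PosSemidef := by
      induction (Finset.univ : Finset (Fin p)) using Finset.induction with
      | empty => simpa using Matrix.PosSemidef.zero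
      | insert a s h ih => rw [Finset.sum_insert h]; exact (hS.conjTranspose_mul_mul_same _).add ih
    exact (hE.add_posSemidef h1).add_posSemidef h2
  refine ⟨hHpd, ?_⟩
  intro x w u hu
  have hHinv : H * H⁻¹ = 1 :=
    Matrix.mul_nonsing_inv H (isUnit_iff_ne_zero.mpr hHpd.det_pos.ne')
  obtain ⟨a0, ha0⟩ : ∃ a0, a0 = A *ᵥ x + B1 *ᵥ w 0 := ⟨_, rfl⟩
  obtain ⟨W, hW⟩ : ∃ W, W = ∑ i : Fin m, Rt i *ᵥ w i.succ := ⟨_, rfl⟩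
  obtain ⟨b, hb⟩ : ∃ b, b = evec + B0ᵀ *ᵥ svec + B0ᵀ *ᵥ (S *ᵥ a0)
      + (∑ i : Fin p, (C0 i)ᵀ *ᵥ (S *ᵥ (c i + C1 i *ᵥ w 0))) + B0ᵀ *ᵥ W := ⟨_, rfl⟩
  obtain ⟨ustar, hustar⟩ : ∃ us, us = Istar + L *ᵥ x + M0 *ᵥ w 0
      + ∑ i : Fin m, M i *ᵥ w i.succ := ⟨_, rfl⟩
  -- u* = -(H⁻¹ b)
  have hstar0 : ustar = -(H⁻¹ *ᵥ b) := by
    rw [hustar, hb, ha0, hW]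
    show -(H⁻¹ *ᵥ _) + (-(H⁻¹ * B0ᵀ * S * A)) *ᵥ x + (-(H⁻¹ * _)) *ᵥ w 0
        + ∑ i : Fin m, (-(H⁻¹ * (B0ᵀ * Rt i))) *ᵥ w i.succ = _
    simp only [Matrix.neg_mulVec, Matrix.mulVec_add, Matrix.add_mulVec, mv_sum,
      Matrix.mulVec_mulVec, sum_mv, Matrix.mulVec_neg, Matrix.mul_assoc, Matrix.mul_add, Finset.mul_sum,
      Finset.sum_neg_distrib, neg_add, Finset.sum_add_distrib]
    abel
  have hstar : H *ᵥ ustar = -b := by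
    rw [hstar0, Matrix.mulVec_neg, Matrix.mulVec_mulVec, hHinv, Matrix.one_mulVec]
  -- J as a quadratic in u
  have hJquad : ∀ v : Fin d → ℝ, J x v w
      = v ⬝ᵥ (H *ᵥ v) + 2 * (v ⬝ᵥ b)
        + (dtil + 2 * (x ⬝ᵥ dvec) + x ⬝ᵥ (D *ᵥ x) + stil + 2 * (a0 ⬝ᵥ svec)
          + a0 ⬝ᵥ (S *ᵥ a0)
          + ∑ i : Fin p, (c i + C1 i *ᵥ w 0) ⬝ᵥ (S *ᵥ (c i + C1 i *ᵥ w 0))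
          + 2 * ∑ i : Fin m, w i.succ ⬝ᵥ r i
          + 2 * (a0 ⬝ᵥ W)
          + ∑ i : Fin m, ∑ j : Fin m, w i.succ ⬝ᵥ (R i j *ᵥ w j.succ)) := by
    intro v
    have e1 : A *ᵥ x + B0 *ᵥ v + B1 *ᵥ w 0 = a0 + B0 *ᵥ v := by rw [ha0]; abel
    have e2 : ∀ i : Fin p, c i + C0 i *ᵥ v + C1 i *ᵥ w 0
        = (c i + C1 i *ᵥ w 0) + C0 i *ᵥ v := by intro i; abel
    show dtil + 2 * (x ⬝ᵥ dvec) + x ⬝ᵥ (D *ᵥ x) + 2 * (v ⬝ᵥ evec) + v ⬝ᵥ (E *ᵥ v)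
        + stil + 2 * ((A *ᵥ x + B0 *ᵥ v + B1 *ᵥ w 0) ⬝ᵥ svec)
        + (A *ᵥ x + B0 *ᵥ v + B1 *ᵥ w 0) ⬝ᵥ (S *ᵥ (A *ᵥ x + B0 *ᵥ v + B1 *ᵥ w 0))
        + ∑ i : Fin p, (c i + C0 i *ᵥ v + C1 i *ᵥ w 0) ⬝ᵥ
            (S *ᵥ (c i + C0 i *ᵥ v + C1 i *ᵥ w 0))
        + 2 * ∑ i : Fin m, w i.succ ⬝ᵥ r i
        + 2 * ((A *ᵥ x + B0 *ᵥ v + B1 *ᵥ w 0) ⬝ᵥ ∑ i : Fin m, Rt i *ᵥ w i.succ)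
        + ∑ i : Fin m, ∑ j : Fin m, w i.succ ⬝ᵥ (R i j *ᵥ w j.succ) = _
    rw [← hW, e1]
    have hsq : ∀ i : Fin p, ((c i + C1 i *ᵥ w 0) + C0 i *ᵥ v) ⬝ᵥ
        (S *ᵥ ((c i + C1 i *ᵥ w 0) + C0 i *ᵥ v))
        = (c i + C1 i *ᵥ w 0) ⬝ᵥ (S *ᵥ (c i + C1 i *ᵥ w 0))
          + 2 * (v ⬝ᵥ ((C0 i)ᵀ *ᵥ (S *ᵥ (c i + C1 i *ᵥ w 0))))
          + v ⬝ᵥ (((C0 i)ᵀ * S * C0 i) *ᵥ v) :=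
      fun i => sq_expand hSsym (C0 i) _ v
    simp only [e2, hsq]
    rw [sq_expand hSsym B0 a0 v]
    have hHexp : v ⬝ᵥ (H *ᵥ v) = v ⬝ᵥ (E *ᵥ v) + v ⬝ᵥ ((B0ᵀ * S * B0) *ᵥ v)
        + ∑ i : Fin p, v ⬝ᵥ (((C0 i)ᵀ * S * C0 i) *ᵥ v) := by
      show v ⬝ᵥ ((E + B0ᵀ * S * B0 + ∑ i : Fin p, (C0 i)ᵀ * S * C0 i) *ᵥ v) = _
      rw [Matrix.add_mulVec, Matrix.add_mulVec, sum_mv, dotProduct_add, dotProduct_add,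
        dot_sum]
    have hbexp : v ⬝ᵥ b = v ⬝ᵥ evec + v ⬝ᵥ (B0ᵀ *ᵥ svec) + v ⬝ᵥ (B0ᵀ *ᵥ (S *ᵥ a0))
        + ∑ i : Fin p, v ⬝ᵥ ((C0 i)ᵀ *ᵥ (S *ᵥ (c i + C1 i *ᵥ w 0))) + v ⬝ᵥ (B0ᵀ *ᵥ W) := by
      rw [hb]
      rw [dotProduct_add, dotProduct_add, dotProduct_add, dotProduct_add, dot_sum]
    have hsum : ∑ i : Fin p,
        ((c i + C1 i *ᵥ w 0) ⬝ᵥ (S *ᵥ (c i + C1 i *ᵥ w 0))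
          + 2 * (v ⬝ᵥ ((C0 i)ᵀ *ᵥ (S *ᵥ (c i + C1 i *ᵥ w 0))))
          + v ⬝ᵥ (((C0 i)ᵀ * S * C0 i) *ᵥ v))
        = ∑ i : Fin p, (c i + C1 i *ᵥ w 0) ⬝ᵥ (S *ᵥ (c i + C1 i *ᵥ w 0))
          + 2 * ∑ i : Fin p, v ⬝ᵥ ((C0 i)ᵀ *ᵥ (S *ᵥ (c i + C1 i *ᵥ w 0)))
          + ∑ i : Fin p, v ⬝ᵥ (((C0 i)ᵀ * S * C0 i) *ᵥ v) := by
      rw [Finset.sum_add_distrib, Finset.sum_add_distrib, Finset.mul_sum]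
    have hsvec : (a0 + B0 *ᵥ v) ⬝ᵥ svec = a0 ⬝ᵥ svec + v ⬝ᵥ (B0ᵀ *ᵥ svec) := by
      rw [add_dotProduct, mv_dot]
    have hWdot : (a0 + B0 *ᵥ v) ⬝ᵥ W = a0 ⬝ᵥ W + v ⬝ᵥ (B0ᵀ *ᵥ W) := by
      rw [add_dotProduct, mv_dot]
    rw [hsum, hsvec, hWdot, hHexp, hbexp]
    ring
  have hlt : J x ustar w < J x u w := by
    rw [hJquad u, hJquad ustar]
    rw [← hustar] at hu
    have := quad_min hHpd b u ustar hstar hu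
    linarith
  rwa [hustar] at hlt
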